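/- With V = V_k ⊗ W, m ≥ 2, k ≥ 3, and ωᵢ as above, let ∂¹ : Hom(V, sl(2,ℝ)×gl(m,ℝ)) → Hom(Λ²V, V) be the first Spencer operator and π_W : Hom(Λ²V, V) → Hom(Λ²V, V/F) ≅ Hom(Λ²V, W) the projection modulo F = ⟨v¹,…,v^k⟩⊗W. Then no nonzero linear combination of the elements π_W(∂¹ωᵢ), i = 1,…,m, lies in the kernel of the restriction map Hom(Λ²V, W) → Hom(Λ²F, W). -/

import Mathlib

/-- The basis vector `v^i ⊗ e_j` of `V = V_k ⊗ W`, modelled as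
`Fin (k+1) → Fin m → ℝ`. -/
noncomputable def basisVec (k m : ℕ) (i : Fin (k + 1)) (j : Fin m) :
    Fin (k + 1) → Fin m → ℝ :=
  Pi.single i (Pi.single j 1)

/-- The coordinate functional on `V = V_k ⊗ W` picking the coefficient of
`v^a ⊗ e_b`. -/
noncomputable def coordFn (k m : ℕ) (a : Fin (k + 1)) (b : Fin m) :
    (Fin (k + 1) → Fin m → ℝ) →ₗ[ℝ] ℝ :=
  (LinearMap.proj (R := ℝ) (φ := fun _ : Fin m => ℝ) b).comp
    (LinearMap.proj (R := ℝ) (φ := fun _ : Fin (k + 1) => Fin m → ℝ) a)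

/-- `ωᵢ = 2 (v^{k−2}⊗eᵢ)* ⊗ x + (k−1) (v^{k−1}⊗eᵢ)* ⊗ h + k(k−1) (v^k⊗eᵢ)* ⊗ y`,
realised as a map `V → gl(V)` through the `sl(2)`-action `X, H, Y` on `V`. -/
noncomputable def omegaOp (k m : ℕ) (hk : 3 ≤ k)
    (X H Y : Module.End ℝ (Fin (k + 1) → Fin m → ℝ)) (i : Fin m) :
    (Fin (k + 1) → Fin m → ℝ) →ₗ[ℝ] Module.End ℝ (Fin (k + 1) → Fin m → ℝ) :=
  (2 : ℝ) • (coordFn k m (⟨k - 2, by omega⟩ : Fin (k + 1)) i).smulRight X +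
  ((k : ℝ) - 1) • (coordFn k m (⟨k - 1, by omega⟩ : Fin (k + 1)) i).smulRight H +
  ((k : ℝ) * ((k : ℝ) - 1)) • (coordFn k m (⟨k, by omega⟩ : Fin (k + 1)) i).smulRight Y

/-- With `V = V_k ⊗ W` (`m ≥ 2`, `k ≥ 3`), the `sl(2)`-generators
`X, H, Y` acting on `V`, and `ωᵢ` as in Statement 15, let
`∂¹ωᵢ(u,v) = ωᵢ(v)·u − ωᵢ(u)·v` be the first Spencer operator and `π_W` the
projection modulo `F = ⟨v¹,…,v^k⟩ ⊗ W` (taking the `v⁰`-component).  Then no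
nonzero linear combination of the `π_W(∂¹ωᵢ)` vanishes upon restriction to
`Λ²F`: if `∑ tᵢ·π_W(∂¹ωᵢ)(u, v) = 0` for all `u, v ∈ F`, then `t = 0`. -/
theorem no_combination_of_spencer_images_in_ker_alpha
    (k m : ℕ) (hk : 3 ≤ k) (hm : 2 ≤ m)
    (X H Y : Module.End ℝ (Fin (k + 1) → Fin m → ℝ))
    (hX : ∀ (i : Fin (k + 1)) (j : Fin m), X (basisVec k m i j) =
      if h : (i : ℕ) < k then basisVec k m (⟨(i : ℕ) + 1, by omega⟩ : Fin (k + 1)) j else 0)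
    (hH : ∀ (i : Fin (k + 1)) (j : Fin m), H (basisVec k m i j) =
      ((k : ℝ) - 2 * (i : ℕ)) • basisVec k m i j)
    (hY : ∀ (i : Fin (k + 1)) (j : Fin m), Y (basisVec k m i j) =
      if h : 0 < (i : ℕ) then
        (((i : ℕ) : ℝ) * ((k : ℝ) + 1 - (i : ℕ))) •
          basisVec k m (⟨(i : ℕ) - 1, by omega⟩ : Fin (k + 1)) j else 0)
    (t : Fin m → ℝ)
    (hvanish : ∀ u v : Fin (k + 1) → Fin m → ℝ, u 0 = 0 → v 0 = 0 →
      (∑ i : Fin m, t i •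
        (omegaOp k m hk X H Y i v u - omegaOp k m hk X H Y i u v)) 0 = 0) :
    t = 0 := by
  funext j
  simp only [Pi.zero_apply]
  set i1 : Fin (k+1) := ⟨1, by omega⟩ with hi1
  set ik : Fin (k+1) := ⟨k, by omega⟩ with hik
  have h01 : (0 : Fin (k+1)) ≠ i1 := by simp [hi1, Fin.ext_iff]
  have h0k : (0 : Fin (k+1)) ≠ ik := by simp [hik, Fin.ext_iff]; omega
  set u := basisVec k m i1 j with hu
  set v := basisVec k m ik j with hv
  have hXu : X u = basisVec k m ⟨2, by omega⟩ j := by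
    rw [hu, hX]; rw [dif_pos (by simpa [hi1] using by omega : ((i1:ℕ) < k))]
  have hHu : H u = ((k:ℝ) - 2) • u := by
    rw [hu, hH]; norm_num [hi1]
  have hYu : Y u = (k:ℝ) • basisVec k m 0 j := by
    rw [hu, hY]; rw [dif_pos (by simp [hi1] : (0 < (i1:ℕ)))]
    norm_num [hi1]
  have hXv : X v = 0 := by
    rw [hv, hX]; rw [dif_neg (by simp [hik] : ¬ ((ik:ℕ) < k))]
  have hHv : H v = ((k:ℝ) - 2*k) • v := by rw [hv, hH]
  have hYv : Y v = ((k:ℝ) * ((k:ℝ) + 1 - (k:ℝ))) • basisVec k m ⟨k-1, by omega⟩ j := by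
    rw [hv, hY]; rw [dif_pos (by simp [hik]; omega : (0 < (ik:ℕ)))]
  have hcu : ∀ (a : Fin (k+1)) (b : Fin m), coordFn k m a b u
      = if a = i1 ∧ b = j then 1 else 0 := by
    intro a b
    simp only [coordFn, hu, basisVec, LinearMap.coe_comp, Function.comp_apply,
      LinearMap.proj_apply, Pi.single_apply]
    by_cases ha : a = i1 <;> by_cases hb : b = j <;> simp [ha, hb, Pi.single_apply]
  have hcv : ∀ (a : Fin (k+1)) (b : Fin m), coordFn k m a b v
      = if a = ik ∧ b = j then 1 else 0 := by
    intro a b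
    simp only [coordFn, hv, basisVec, LinearMap.coe_comp, Function.comp_apply,
      LinearMap.proj_apply, Pi.single_apply]
    by_cases ha : a = ik <;> by_cases hb : b = j <;> simp [ha, hb, Pi.single_apply]
  have hne1 : (⟨k-2, by omega⟩ : Fin (k+1)) ≠ ik := by simp [hik, Fin.ext_iff]; omega
  have hne2 : (⟨k-1, by omega⟩ : Fin (k+1)) ≠ ik := by simp [hik, Fin.ext_iff]; omega
  have hne3 : (⟨k-1, by omega⟩ : Fin (k+1)) ≠ i1 := by simp [hi1, Fin.ext_iff]; omega
  have hne4 : ik ≠ i1 := by simp [hik, hi1, Fin.ext_iff]; omega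
  have hne6 : (0 : Fin (k+1)) ≠ (⟨k-1, by omega⟩ : Fin (k+1)) := by
    simp [Fin.ext_iff]; omega
  have h := hvanish u v (by rw [hu, basisVec]; exact Pi.single_eq_of_ne h01 _)
    (by rw [hv, basisVec]; exact Pi.single_eq_of_ne h0k _)
  have h2 := congrFun h j
  simp only [omegaOp, LinearMap.add_apply, LinearMap.smul_apply, LinearMap.smulRight_apply,
    hcu, hcv, hXu, hHu, hYu, hXv, hHv, hYv, Finset.sum_apply, Pi.smul_apply, Pi.sub_apply,
    Pi.add_apply, Pi.zero_apply, smul_eq_mul] at h2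
  have hu0 : u 0 = 0 := by rw [hu, basisVec]; exact Pi.single_eq_of_ne h01 _
  have hv0 : v 0 = 0 := by rw [hv, basisVec]; exact Pi.single_eq_of_ne h0k _
  have hne7 : (0 : Fin (k+1)) ≠ (⟨2, by omega⟩ : Fin (k+1)) := by simp [Fin.ext_iff]
  simp only [← hik, hne1, hne2, hne3, hne4, if_false, false_and, true_and, hu0, hv0, Pi.zero_apply,
    basisVec, Pi.single_eq_of_ne hne6.symm, Pi.single_eq_of_ne hne7.symm, Pi.single_eq_same,
    mul_zero, zero_mul, mul_one, add_zero, zero_add, sub_zero, mul_ite, ite_mul,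
    Finset.sum_ite_eq', Finset.mem_univ, if_true] at h2
  have hk3 : (3:ℝ) ≤ (k:ℝ) := by exact_mod_cast hk
  have hpos : (0:ℝ) < (k:ℝ) * ((k:ℝ) - 1) * (1 * (k:ℝ)) := by
    have h1 : (0:ℝ) < (k:ℝ) := by linarith
    have h2 : (0:ℝ) < (k:ℝ) - 1 := by linarith
    rw [one_mul]; exact mul_pos (mul_pos h1 h2) h1
  exact (mul_eq_zero.mp h2).resolve_right (ne_of_gt hpos)
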